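/- Let n > 2 be an even integer such that n/2 does not divide 2^{n−1} and n/2 does not divide 2^{n−1} − 1. Then the n-dimensional hypercube Q_n does not admit n/2 completely independent spanning trees. -/

import Mathlib

open SimpleGraph

/-- `T` is a spanning tree of `G`: a subgraph of `G` (on the same vertex set) that is a tree. -/
def IsSpanningTreeOf {V : Type*} (G T : SimpleGraph V) : Prop :=
  T ≤ G ∧ T.IsTree

/-- A family of spanning trees of `G` are *completely independent* if for every pair of
distinct vertices `x ≠ y` and distinct indices `i ≠ j`, the (unique) paths from `x` to `y`
in `T i` and `T j` share no edges, and share no vertices except `x` and `y`. -/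
def AreCISTs {V : Type*} {k : ℕ} (G : SimpleGraph V) (T : Fin k → SimpleGraph V) : Prop :=
  (∀ i, IsSpanningTreeOf G (T i)) ∧
  ∀ x y : V, x ≠ y → ∀ i j : Fin k, i ≠ j →
    ∀ p : (T i).Walk x y, ∀ q : (T j).Walk x y, p.IsPath → q.IsPath →
      (∀ e ∈ p.edges, e ∉ q.edges) ∧
      (∀ v ∈ p.support, v ∈ q.support → v = x ∨ v = y)

/-- The `n`-dimensional hypercube: vertices are functions `Fin n → ZMod 2`, adjacent iff
they differ in exactly one coordinate. -/
def hypercube (n : ℕ) : SimpleGraph (Fin n → ZMod 2) where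
  Adj x y := hammingDist x y = 1
  symm := ⟨fun x y (h : hammingDist x y = 1) => by show hammingDist y x = 1; rwa [hammingDist_comm]⟩
  loopless := ⟨fun x (h : hammingDist x x = 1) => by simp [hammingDist_self] at h⟩

/-- `G` is `k`-connected: it has more than `k` vertices and remains connected after
removing any set of fewer than `k` vertices. -/
def KConnected {V : Type*} (G : SimpleGraph V) (k : ℕ) : Prop :=
  k < Nat.card V ∧
  ∀ s : Finset V, s.card < k → ((G.induce ((↑s : Set V)ᶜ))).Connected

/-- `G` is `k`-regular: every vertex has exactly `k` neighbours. -/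
def IsKRegular {V : Type*} (G : SimpleGraph V) (k : ℕ) : Prop :=
  ∀ v : V, (G.neighborSet v).ncard = k

open Finset
section Aux
variable {n : ℕ}

theorem hyp_adj_iff {x y : Fin n → ZMod 2} :
    (hypercube n).Adj x y ↔ ∃ i, y = Function.update x i (x i + 1) := by
  show hammingDist x y = 1 ↔ _
  constructor
  · intro h
    rw [hammingDist, Finset.card_eq_one] at h
    obtain ⟨a, ha⟩ := h
    refine ⟨a, funext fun j => ?_⟩
    by_cases hj : j = a
    · subst hj
      have hxy : x j ≠ y j := by
        have : j ∈ ({i | x i ≠ y i} : Finset (Fin n)) := by rw [ha]; simp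
        simpa using this
      have : ∀ u v : ZMod 2, u ≠ v → v = u + 1 := by decide
      simp [Function.update, this _ _ hxy]
    · have : j ∉ ({i | x i ≠ y i} : Finset (Fin n)) := by rw [ha]; simp [hj]
      simp at this
      simp [Function.update, hj, this]
  · rintro ⟨i, rfl⟩
    rw [hammingDist, Finset.card_eq_one]
    refine ⟨i, Finset.ext fun j => ?_⟩
    by_cases hj : j = i
    · subst hj
      have : ∀ u : ZMod 2, u ≠ u + 1 := by decide
      simp [Function.update, this]
    · simp [Function.update, hj]

theorem hyp_degree [DecidableRel (hypercube n).Adj] (v : Fin n → ZMod 2) :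
    (hypercube n).degree v = n := by
  classical
  have h : (hypercube n).neighborFinset v =
      Finset.univ.image (fun i : Fin n => Function.update v i (v i + 1)) := by
    ext u
    simp only [mem_neighborFinset, hyp_adj_iff, Finset.mem_image, Finset.mem_univ, true_and]
    constructor
    · rintro ⟨i, rfl⟩; exact ⟨i, rfl⟩
    · rintro ⟨i, rfl⟩; exact ⟨i, rfl⟩
  rw [← card_neighborFinset_eq_degree, h, Finset.card_image_of_injective _ ?_,
    Finset.card_univ, Fintype.card_fin]
  intro i j hij
  by_contra hne
  have h1 : Function.update v i (v i + 1) i = v i + 1 := by simp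
  have h2 : Function.update v j (v j + 1) i = v i := by simp [Function.update, hne]
  simp only [] at hij
  rw [hij] at h1
  rw [h1] at h2
  have : ∀ u : ZMod 2, u + 1 ≠ u := by decide
  exact this _ h2

noncomputable def par (v : Fin n → ZMod 2) : ZMod 2 := ∑ j, v j

theorem par_adj {x y : Fin n → ZMod 2} (h : (hypercube n).Adj x y) : par y = par x + 1 := by
  obtain ⟨i, rfl⟩ := hyp_adj_iff.1 h
  rw [par, par, Finset.sum_update_of_mem (Finset.mem_univ i),
    ← Finset.add_sum_erase _ _ (Finset.mem_univ i), Finset.sdiff_singleton_eq_erase]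
  ring

theorem card_par_even (hn : 0 < n) :
    (Finset.univ.filter (fun v : Fin n → ZMod 2 => par v = 0)).card = 2 ^ (n - 1) := by
  classical
  set X := Finset.univ.filter (fun v : Fin n → ZMod 2 => par v = 0) with hX
  set Y := Finset.univ.filter (fun v : Fin n → ZMod 2 => ¬ par v = 0) with hY
  have i0 : Fin n := ⟨0, hn⟩
  have hadj : ∀ v : Fin n → ZMod 2, (hypercube n).Adj v (Function.update v i0 (v i0 + 1)) :=
    fun v => hyp_adj_iff.2 ⟨i0, rfl⟩
  have hparf : ∀ v : Fin n → ZMod 2, par (Function.update v i0 (v i0 + 1)) = par v + 1 :=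
    fun v => par_adj (hadj v)
  have hinv : ∀ v : Fin n → ZMod 2,
      Function.update (Function.update v i0 (v i0 + 1)) i0
        ((Function.update v i0 (v i0 + 1)) i0 + 1) = v := by
    intro v
    funext j
    by_cases hj : j = i0
    · subst hj
      simp [Function.update]
      have : ∀ u : ZMod 2, u + 1 + 1 = u := by decide
      exact this _
    · simp [Function.update, hj]
  have hcard : X.card = Y.card := by
    apply Finset.card_bij (fun v _ => Function.update v i0 (v i0 + 1))
    · intro a ha
      rw [hX, Finset.mem_filter] at ha
      rw [hY, Finset.mem_filter]
      refine ⟨Finset.mem_univ _, ?_⟩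
      rw [hparf, ha.2]
      decide
    · intro a ha b hb hab
      rw [← hinv a, ← hinv b, hab]
    · intro b hb
      refine ⟨Function.update b i0 (b i0 + 1), ?_, (hinv b).symm ▸ rfl⟩
      · rw [hY, Finset.mem_filter] at hb
        rw [hX, Finset.mem_filter]
        refine ⟨Finset.mem_univ _, ?_⟩
        have := hparf b
        have h2 : ∀ u : ZMod 2, ¬ u = 0 → u + 1 = 0 := by decide
        rw [this, h2 _ hb.2]
  have hsplit : X.card + Y.card = 2 ^ n := by
    rw [Finset.card_filter_add_card_filter_not]
    rw [Finset.card_univ]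
    rw [Fintype.card_fun]
    simp
  have h2n : 2 ^ n = 2 * 2 ^ (n - 1) := by
    rw [← pow_succ']
    congr 1
    omega
  omega

theorem sum_degree_side {V : Type*} [Fintype V] [DecidableEq V] (G : SimpleGraph V)
    [DecidableRel G.Adj] (X : Finset V)
    (hcross : ∀ {x y}, G.Adj x y → (x ∈ X ↔ y ∉ X)) :
    ∑ v ∈ X, G.degree v = G.edgeFinset.card := by
  have hdegX : ∀ v ∈ X, G.degree v = ∑ u ∈ Finset.univ \ X, (if G.Adj v u then 1 else 0) := by
    intro v hv
    rw [← card_neighborFinset_eq_degree]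
    have : G.neighborFinset v = (Finset.univ \ X).filter (G.Adj v) := by
      ext u
      simp only [mem_neighborFinset, Finset.mem_filter, Finset.mem_sdiff, Finset.mem_univ,
        true_and]
      exact ⟨fun h => ⟨(hcross h).1 hv, h⟩, fun h => h.2⟩
    rw [this, Finset.card_filter]
  have hdegY : ∀ u ∈ Finset.univ \ X, G.degree u = ∑ v ∈ X, (if G.Adj v u then 1 else 0) := by
    intro u hu
    rw [Finset.mem_sdiff] at hu
    rw [← card_neighborFinset_eq_degree]
    have : G.neighborFinset u = X.filter (fun v => G.Adj v u) := by
      ext v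
      simp only [mem_neighborFinset, Finset.mem_filter]
      constructor
      · intro h
        exact ⟨by_contra fun hv => hu.2 ((hcross h).2 hv), h.symm⟩
      · exact fun h => h.2.symm
    rw [this, Finset.card_filter]
  have key : ∑ v ∈ X, G.degree v = ∑ u ∈ Finset.univ \ X, G.degree u := by
    rw [Finset.sum_congr rfl hdegX, Finset.sum_congr rfl hdegY, Finset.sum_comm]
  have hs : ∑ u ∈ Finset.univ \ X, G.degree u + ∑ v ∈ X, G.degree v = ∑ v, G.degree v :=
    Finset.sum_sdiff (Finset.subset_univ X)
  have := G.sum_degrees_eq_twice_card_edges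
  omega

variable {V : Type*} {k : ℕ} {G : SimpleGraph V} {T : Fin k → SimpleGraph V}

theorem cists_edge_disjoint (hC : AreCISTs G T) {i j : Fin k} (hij : i ≠ j) {v u : V}
    (hi : (T i).Adj v u) (hj : (T j).Adj v u) : False := by
  have hvu : v ≠ u := hi.ne
  have hp : ((hi.toWalk : (T i).Walk v u)).IsPath := by simp [hvu]
  have hq : ((hj.toWalk : (T j).Walk v u)).IsPath := by simp [hvu]
  have := (hC.2 v u hvu i j hij hi.toWalk hj.toWalk hp hq).1 s(v, u) (by simp) (by simp)
  exact this

/-- `x` and `y` are connected by a path avoiding `w`. -/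
def AvoidConn (G : SimpleGraph V) (w x y : V) : Prop :=
  ∃ p : G.Walk x y, p.IsPath ∧ w ∉ p.support

theorem AvoidConn.symm' {G : SimpleGraph V} {w x y : V} (h : AvoidConn G w x y) :
    AvoidConn G w y x := by
  obtain ⟨p, hp, hw⟩ := h
  exact ⟨p.reverse, hp.reverse, by simpa using hw⟩

theorem AvoidConn.trans' {G : SimpleGraph V} {w x y z : V} (h : AvoidConn G w x y)
    (h' : AvoidConn G w y z) : AvoidConn G w x z := by
  classical
  obtain ⟨p, hp, hw⟩ := h
  obtain ⟨q, hq, hw'⟩ := h'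
  refine ⟨(p.append q).bypass, SimpleGraph.Walk.bypass_isPath _, fun hmem => ?_⟩
  have := SimpleGraph.Walk.support_bypass_subset _ hmem
  rw [SimpleGraph.Walk.mem_support_append_iff] at this
  tauto

theorem AvoidConn.refl' {G : SimpleGraph V} {w x : V} (hx : x ≠ w) : AvoidConn G w x x :=
  ⟨SimpleGraph.Walk.nil, SimpleGraph.Walk.IsPath.nil, by simp [Ne.symm hx]⟩

/-- In a tree, two distinct neighbors of `w` cannot be joined by a path avoiding `w`. -/
theorem not_avoidConn_of_adj {G : SimpleGraph V} (hT : G.IsTree) {w a b : V}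
    (ha : G.Adj w a) (hb : G.Adj w b) (hab : a ≠ b) : ¬ AvoidConn G w a b := by
  rintro ⟨p, hp, hw⟩
  have hp2 : ((SimpleGraph.Walk.cons ha.symm (hb.toWalk)) : G.Walk a b).IsPath := by
    simp [SimpleGraph.Walk.cons_isPath_iff, hb.ne, hab, ha.ne']
  have := (hT.existsUnique_path a b).unique hp hp2
  rw [this] at hw
  simp at hw

theorem tree_path_exists {G : SimpleGraph V} (hT : G.IsTree) (x y : V) :
    ∃ p : G.Walk x y, p.IsPath := by
  classical
  obtain ⟨w⟩ := hT.isConnected x y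
  exact ⟨w.bypass, SimpleGraph.Walk.bypass_isPath w⟩

theorem cists_internal_disjoint (hC : AreCISTs G T) {i j : Fin k} (hij : i ≠ j) {w a b c d : V}
    (ha : (T i).Adj w a) (hb : (T i).Adj w b) (hab : a ≠ b)
    (hc : (T j).Adj w c) (hd : (T j).Adj w d) (hcd : c ≠ d) : False := by
  have hTi := (hC.1 i).2
  have hTj := (hC.1 j).2
  have notQiab := not_avoidConn_of_adj hTi ha hb hab
  have notQjcd := not_avoidConn_of_adj hTj hc hd hcd
  have D : ∀ x y : V, x ≠ y → x ≠ w → y ≠ w →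
      AvoidConn (T i) w x y ∨ AvoidConn (T j) w x y := by
    intro x y hxy hxw hyw
    by_contra hcon
    push_neg at hcon
    obtain ⟨p, hp⟩ := tree_path_exists hTi x y
    obtain ⟨q, hq⟩ := tree_path_exists hTj x y
    have hwp : w ∈ p.support := by
      by_contra hmem; exact hcon.1 ⟨p, hp, hmem⟩
    have hwq : w ∈ q.support := by
      by_contra hmem; exact hcon.2 ⟨q, hq, hmem⟩
    rcases (hC.2 x y hxy i j hij p q hp hq).2 w hwp hwq with h | h
    · exact hxw h.symm
    · exact hyw h.symm
  have hQjab : AvoidConn (T j) w a b := by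
    rcases D a b hab ha.ne' hb.ne' with h | h
    · exact absurd h notQiab
    · exact h
  -- the key combination step, parametrized by e with ¬Avoid_j a e and ¬Avoid_j b e
  have key : ∀ e : V, e ≠ w → ¬ AvoidConn (T j) w a e → ¬ AvoidConn (T j) w b e → False := by
    intro e hew hnae hnbe
    have hae : a ≠ e := fun h => hnae (h ▸ AvoidConn.refl' (h ▸ ha.ne'))
    have hbe : b ≠ e := fun h => hnbe (h ▸ AvoidConn.refl' (h ▸ hb.ne'))
    have hiae : AvoidConn (T i) w a e := by
      rcases D a e hae ha.ne' hew with h | h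
      · exact h
      · exact absurd h hnae
    have hibe : AvoidConn (T i) w b e := by
      rcases D b e hbe hb.ne' hew with h | h
      · exact h
      · exact absurd h hnbe
    exact notQiab (hiae.trans' hibe.symm')
  by_cases hac : AvoidConn (T j) w a c
  · exact key d hd.ne'
      (fun h => notQjcd (hac.symm'.trans' h))
      (fun h => notQjcd (hac.symm'.trans' (hQjab.trans' h)))
  · exact key c hc.ne' hac (fun h => hac (hQjab.trans' h))

theorem counting_core {V : Type*} [Fintype V] [DecidableEq V] (k m : ℕ) (hk : 2 ≤ k)
    (hm : 1 ≤ m) (d : Fin k → V → ℕ) (X : Finset V)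
    (hX : X.card = m) (hXc : (univ \ X).card = m)
    (E1 : ∀ i v, 1 ≤ d i v)
    (E2 : ∀ v, ∑ i, d i v ≤ 2 * k)
    (E3 : ∀ i, ∑ v ∈ X, d i v = 2 * m - 1)
    (E3' : ∀ i, ∑ v ∈ univ \ X, d i v = 2 * m - 1)
    (E4 : ∀ v, ∀ i j : Fin k, i ≠ j → 2 ≤ d i v → 2 ≤ d j v → False)
    (h1 : ¬ (k ∣ m)) (h2 : ¬ (k ∣ m - 1)) : False := by
  set t : V → ℕ := fun v => ∑ i, (d i v - 1) with ht
  have hsum1 : ∀ v, t v + k = ∑ i, d i v := by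
    intro v
    have h1' : ∑ _i : Fin k, 1 = k := by simp
    rw [ht]
    simp only []
    calc ∑ i, (d i v - 1) + k = ∑ i, (d i v - 1) + ∑ _i : Fin k, 1 := by rw [h1']
      _ = ∑ i, ((d i v - 1) + 1) := Finset.sum_add_distrib.symm
      _ = ∑ i, d i v := Finset.sum_congr rfl fun i _ => Nat.sub_add_cancel (E1 i v)
  have ht_le : ∀ v, t v ≤ k := fun v => by have := hsum1 v; have := E2 v; omega
  -- per-side analysis
  have side : ∀ A : Finset V, A.card = m → (∀ i, ∑ v ∈ A, d i v = 2 * m - 1) →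
      (∀ i, ∑ v ∈ A.filter (fun v => 2 ≤ d i v), (d i v - 1) = m - 1) := by
    intro A hA hE3 i
    have hsub : ∑ v ∈ A, (d i v - 1) + m = 2 * m - 1 := by
      have : ∑ v ∈ A, (d i v - 1) + ∑ v ∈ A, 1 = ∑ v ∈ A, d i v := by
        rw [← Finset.sum_add_distrib]
        exact Finset.sum_congr rfl fun v _ => Nat.sub_add_cancel (E1 i v)
      rw [hE3 i] at this
      rw [← this, Finset.sum_const, smul_eq_mul, mul_one, hA]
    have hfil : ∑ v ∈ A.filter (fun v => 2 ≤ d i v), (d i v - 1) = ∑ v ∈ A, (d i v - 1) := by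
      apply Finset.sum_filter_of_ne
      intro v _ hne
      have := E1 i v
      omega
    omega
  -- on the filter set, t v = d i v - 1
  have hton : ∀ (i : Fin k) v, 2 ≤ d i v → t v = d i v - 1 := by
    intro i v hv
    rw [ht]
    simp only []
    apply Finset.sum_eq_single_of_mem i (Finset.mem_univ i)
    intro j _ hji
    have : ¬ (2 ≤ d j v) := fun h => E4 v j i hji h hv
    have := E1 j v
    omega
  -- per tree per side lower bound on slack
  set r := (m - 1) % k with hr
  have hrpos : 0 < r := Nat.pos_of_ne_zero fun h => h2 (Nat.dvd_of_mod_eq_zero h)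
  have hrlt : r < k := Nat.mod_lt _ (by omega)
  have slackbound : ∀ A : Finset V, A.card = m → (∀ i, ∑ v ∈ A, d i v = 2 * m - 1) →
      ∀ i, k - r ≤ ∑ v ∈ A.filter (fun v => 2 ≤ d i v), (k - t v) := by
    intro A hA hE3 i
    set S := A.filter (fun v => 2 ≤ d i v) with hS
    set u := ∑ v ∈ S, (k - t v) with hu
    have hts : ∑ v ∈ S, t v = m - 1 := by
      rw [← side A hA hE3 i]
      apply Finset.sum_congr rfl
      intro v hv
      rw [hS, Finset.mem_filter] at hv
      exact hton i v hv.2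
    have hsum : u + (m - 1) = k * S.card := by
      rw [hu, ← hts, ← Finset.sum_add_distrib]
      rw [Finset.sum_congr rfl (fun v hv => Nat.sub_add_cancel (ht_le v)),
        Finset.sum_const, smul_eq_mul, mul_comm]
    have hdvd : k ∣ u + (m - 1) := ⟨S.card, hsum⟩
    have hqr : m - 1 = k * ((m-1)/k) + r := (Nat.div_add_mod _ _).symm
    have hdvd2 : k ∣ u + r := by
      have : u + (m - 1) = (u + r) + k * ((m-1)/k) := by omega
      rw [this] at hdvd
      exact (Nat.dvd_add_right (Dvd.intro _ rfl)).mp (by rwa [Nat.add_comm] at hdvd)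
    have : k ≤ u + r := Nat.le_of_dvd (by omega) hdvd2
    omega
  -- disjointness of the internal sets
  have hdisj : ∀ A : Finset V, ∀ i j : Fin k, i ≠ j →
      Disjoint (A.filter (fun v => 2 ≤ d i v)) (A.filter (fun v => 2 ≤ d j v)) := by
    intro A i j hij
    rw [Finset.disjoint_left]
    intro v hv hv'
    rw [Finset.mem_filter] at hv hv'
    exact E4 v i j hij hv.2 hv'.2
  have sideTotal : ∀ A : Finset V, A.card = m → (∀ i, ∑ v ∈ A, d i v = 2 * m - 1) →
      k * (k - r) ≤ ∑ v ∈ A, (k - t v) := by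
    intro A hA hE3
    calc k * (k - r) = ∑ _i : Fin k, (k - r) := by
          rw [Finset.sum_const, Finset.card_univ, Fintype.card_fin, smul_eq_mul]
      _ ≤ ∑ i : Fin k, ∑ v ∈ A.filter (fun v => 2 ≤ d i v), (k - t v) :=
          Finset.sum_le_sum fun i _ => slackbound A hA hE3 i
      _ = ∑ v ∈ Finset.univ.biUnion (fun i : Fin k => A.filter (fun v => 2 ≤ d i v)), (k - t v) :=
          (Finset.sum_biUnion fun i _ j _ hij => hdisj A i j hij).symm
      _ ≤ ∑ v ∈ A, (k - t v) := by
          apply Finset.sum_le_sum_of_subset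
          intro v hv
          rw [Finset.mem_biUnion] at hv
          obtain ⟨i, _, hv⟩ := hv
          exact (Finset.mem_filter.mp hv).1
  -- total slack is 2k
  have httotal : ∑ v, t v = 2 * k * (m - 1) := by
    rw [ht]
    simp only []
    rw [Finset.sum_comm]
    have : ∀ i : Fin k, ∑ v, (d i v - 1) = 2 * (m - 1) := by
      intro i
      have hsplit : ∑ v ∈ univ \ X, (d i v - 1) + ∑ v ∈ X, (d i v - 1) = ∑ v, (d i v - 1) :=
        Finset.sum_sdiff (Finset.subset_univ X)
      have e1 : ∑ v ∈ X, (d i v - 1) = m - 1 := by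
        have h := side X hX E3 i
        have hfil : ∑ v ∈ X.filter (fun v => 2 ≤ d i v), (d i v - 1) = ∑ v ∈ X, (d i v - 1) := by
          apply Finset.sum_filter_of_ne
          intro v _ hne
          have := E1 i v
          omega
        omega
      have e2 : ∑ v ∈ univ \ X, (d i v - 1) = m - 1 := by
        have h := side (univ \ X) hXc E3' i
        have hfil : ∑ v ∈ (univ \ X).filter (fun v => 2 ≤ d i v), (d i v - 1)
            = ∑ v ∈ univ \ X, (d i v - 1) := by
          apply Finset.sum_filter_of_ne
          intro v _ hne
          have := E1 i v
          omega
        omega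
      omega
    rw [Finset.sum_congr rfl fun i _ => this i, Finset.sum_const, Finset.card_univ,
      Fintype.card_fin, smul_eq_mul]
    ring
  have hcardV : Fintype.card V = 2 * m := by
    have : (univ \ X).card + X.card = (univ : Finset V).card :=
      Finset.card_sdiff_add_card_eq_card (Finset.subset_univ X)
    rw [Finset.card_univ] at this
    omega
  have hslacktotal : ∑ v, (k - t v) = 2 * k := by
    obtain ⟨m', rfl⟩ : ∃ m', m = m' + 1 := ⟨m - 1, by omega⟩
    have h1' : ∑ v, (k - t v) + ∑ v, t v = ∑ v : V, k := by
      rw [← Finset.sum_add_distrib]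
      exact Finset.sum_congr rfl fun v _ => Nat.sub_add_cancel (ht_le v)
    rw [Finset.sum_const, Finset.card_univ, hcardV, smul_eq_mul, httotal] at h1'
    have hx : m' + 1 - 1 = m' := rfl
    rw [hx] at h1'
    have hkey : 2 * (m' + 1) * k = 2 * k * m' + 2 * k := by ring
    linarith
  have hsplitslack : ∑ v ∈ univ \ X, (k - t v) + ∑ v ∈ X, (k - t v) = ∑ v, (k - t v) :=
    Finset.sum_sdiff (Finset.subset_univ X)
  have b1 := sideTotal X hX E3
  have b2 := sideTotal (univ \ X) hXc E3'
  -- 2k(k-r) ≤ 2k ⇒ k - r ≤ 1 ⇒ r = k - 1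
  have hkr : k - r ≤ 1 := by
    nlinarith [hslacktotal, hsplitslack, b1, b2]
  have hreq : r = k - 1 := by omega
  -- then k ∣ m, contradiction
  apply h1
  have : m % k = 0 := by
    have hm1 : m = (m - 1) + 1 := by omega
    rw [hm1, Nat.add_mod, ← hr, hreq]
    have : (k - 1 + 1) = k := by omega
    simp [this]
  exact Nat.dvd_of_mod_eq_zero this

theorem degree_pos_of_connected {V : Type*} [Fintype V] (G : SimpleGraph V)
    [DecidableRel G.Adj] (hG : G.Connected) (hV : Nontrivial V) (v : V) :
    0 < G.degree v := by
  obtain ⟨u, hu⟩ := exists_ne v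
  obtain ⟨p⟩ := hG v u
  rw [G.degree_pos_iff_exists_adj]
  cases p with
  | nil => exact absurd rfl hu.symm
  | cons h q => exact ⟨_, h⟩

theorem two_le_degree_iff {V : Type*} [Fintype V] (G : SimpleGraph V)
    [DecidableRel G.Adj] (v : V) (h : 2 ≤ G.degree v) :
    ∃ a b, G.Adj v a ∧ G.Adj v b ∧ a ≠ b := by
  rw [← card_neighborFinset_eq_degree] at h
  obtain ⟨a, ha, b, hb, hab⟩ := Finset.one_lt_card.mp h
  rw [mem_neighborFinset] at ha hb
  exact ⟨a, b, ha, hb, hab⟩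

end Aux

/-- Let `n > 2` be even with `n/2 ∤ 2^(n-1)` and `n/2 ∤ 2^(n-1) - 1`. Then the hypercube
`Q n` does not admit `n/2` completely independent spanning trees. -/
theorem hypercube_even_no_half_cists (n : ℕ) (hn : 2 < n) (heven : Even n)
    (h1 : ¬ (n / 2 ∣ 2 ^ (n - 1))) (h2 : ¬ (n / 2 ∣ 2 ^ (n - 1) - 1)) :
    ¬ ∃ T : Fin (n / 2) → SimpleGraph (Fin n → ZMod 2), AreCISTs (hypercube n) T := by
  classical
  rintro ⟨T, hC⟩
  obtain ⟨c, hc⟩ := heven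
  have h2k : 2 * (n / 2) = n := by omega
  have hk2 : 2 ≤ (n / 2) := by omega
  set m := 2 ^ (n - 1) with hmdef
  have hm1 : 1 ≤ m := Nat.one_le_two_pow
  have h2m : 2 * m = 2 ^ n := by
    rw [hmdef, ← pow_succ']
    congr 1
    omega
  -- the bipartition
  set X : Finset (Fin n → ZMod 2) := Finset.univ.filter (fun v => par v = 0) with hXdef
  have hcardV : Fintype.card (Fin n → ZMod 2) = 2 ^ n := by
    rw [Fintype.card_fun]
    simp
  have hX : X.card = m := card_par_even (by omega)
  have hXc : (univ \ X).card = m := by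
    have : (univ \ X).card + X.card = (univ : Finset (Fin n → ZMod 2)).card :=
      Finset.card_sdiff_add_card_eq_card (Finset.subset_univ X)
    rw [Finset.card_univ, hcardV] at this
    omega
  have hnontriv : Nontrivial (Fin n → ZMod 2) := by
    rw [← Fintype.one_lt_card_iff_nontrivial, hcardV]
    exact Nat.one_lt_two_pow (by omega)
  -- cross property
  have hcross : ∀ (i : Fin (n / 2)) {x y : Fin n → ZMod 2}, (T i).Adj x y → (x ∈ X ↔ y ∉ X) := by
    intro i x y hadj
    have hpar := par_adj ((hC.1 i).1 hadj)
    rw [hXdef]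
    simp only [Finset.mem_filter, Finset.mem_univ, true_and]
    have : ∀ a b : ZMod 2, b = a + 1 → (a = 0 ↔ ¬ b = 0) := by decide
    exact this _ _ hpar
  set d : Fin (n / 2) → (Fin n → ZMod 2) → ℕ := fun i v => (T i).degree v with hd
  -- E1
  have E1 : ∀ i v, 1 ≤ d i v := fun i v =>
    degree_pos_of_connected _ (hC.1 i).2.isConnected hnontriv v
  -- E2
  have E2 : ∀ v, ∑ i, d i v ≤ 2 * (n / 2) := by
    intro v
    have hdisj : ∀ i ∈ (univ : Finset (Fin (n / 2))), ∀ j ∈ univ, i ≠ j →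
        Disjoint ((T i).neighborFinset v) ((T j).neighborFinset v) := by
      intro i _ j _ hij
      rw [Finset.disjoint_left]
      intro u hu hu'
      rw [mem_neighborFinset] at hu hu'
      exact cists_edge_disjoint hC hij hu hu'
    calc ∑ i, d i v = ∑ i, ((T i).neighborFinset v).card := by
          exact Finset.sum_congr rfl fun i _ => (card_neighborFinset_eq_degree _ _).symm
      _ = (univ.biUnion (fun i : Fin (n / 2) => (T i).neighborFinset v)).card :=
          (Finset.card_biUnion hdisj).symm
      _ ≤ ((hypercube n).neighborFinset v).card := by
          apply Finset.card_le_card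
          intro u hu
          rw [Finset.mem_biUnion] at hu
          obtain ⟨i, _, hu⟩ := hu
          rw [mem_neighborFinset] at hu ⊢
          exact (hC.1 i).1 hu
      _ = 2 * (n / 2) := by rw [card_neighborFinset_eq_degree, hyp_degree, h2k]
  -- E3
  have hedges : ∀ i : Fin (n / 2), (T i).edgeFinset.card = 2 * m - 1 := by
    intro i
    have := (hC.1 i).2.card_edgeFinset
    rw [hcardV] at this
    omega
  have E3 : ∀ i, ∑ v ∈ X, d i v = 2 * m - 1 := by
    intro i
    rw [hd]
    simp only []
    rw [sum_degree_side (T i) X (fun h => hcross i h), hedges i]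
  have E3' : ∀ i, ∑ v ∈ univ \ X, d i v = 2 * m - 1 := by
    intro i
    have hcross' : ∀ {x y : Fin n → ZMod 2}, (T i).Adj x y →
        (x ∈ univ \ X ↔ y ∉ univ \ X) := by
      intro x y hadj
      have := hcross i hadj
      simp only [Finset.mem_sdiff, Finset.mem_univ, true_and]
      tauto
    rw [hd]
    simp only []
    rw [sum_degree_side (T i) (univ \ X) hcross', hedges i]
  -- E4
  have E4 : ∀ v, ∀ i j : Fin (n / 2), i ≠ j → 2 ≤ d i v → 2 ≤ d j v → False := by
    intro v i j hij hi hj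
    obtain ⟨a, b, ha, hb, hab⟩ := two_le_degree_iff _ v hi
    obtain ⟨cc, dd, hcc, hdd, hcd⟩ := two_le_degree_iff _ v hj
    exact cists_internal_disjoint hC hij ha hb hab hcc hdd hcd
  exact counting_core (n / 2) m hk2 hm1 d X hX hXc E1 E2 E3 E3' E4 h1 h2
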